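/- arXiv:2102.03492 — 2 statements merged into one kernel-verified Lean document; each statement's English description precedes it below -/
import Mathlib

section
/- Let X and Y be J-posets, let ψ: Str_F X → Str_F Y be an isomorphism of posets, and let x ∈ X₁. For z ∈ X₁ let K_{Str_F X}(z) denote the set of all (K, {b}) ∈ Str_F X such that z ∈ K and mub(K) = {b}. Then there exists a unique y ∈ Y₁ such that ψ(K_{Str_F X}(x)) = K_{Str_F Y}(y). -/
open Order Set

/-- The minimal upper bound set of `A`: the minimal elements of the set of upper bounds. -/
def mub (X : Type*) [PartialOrder X] (A : Set X) : Set X :=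
  {x ∈ upperBounds A | ∀ y ∈ upperBounds A, ¬ y < x}

/-- The set of elements of height `i` in `X`. -/
def level (X : Type*) [PartialOrder X] (i : ℕ) : Set X :=
  {x : X | Order.height x = (i : ℕ∞)}

/-- A J-poset: a countable poset with a unique minimal element satisfying (J1)-(J4). -/
structure IsJPoset (X : Type*) [PartialOrder X] : Prop where
  countable : Countable X
  uniqueMin : ∃! x : X, IsMin x
  dim2 : Order.krullDim X = 2
  mubFinite : ∀ A : Set X, A.Nonempty → (mub X A).Finite
  j2 : ∀ x ∈ level X 1, {z : X | x < z}.Infinite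
  j3 : ∀ m ∈ level X 2, ∀ F : Set X, F ⊆ level X 1 → F.Finite →
        ∃ K : Set X, K ⊆ level X 1 ∧ K.Finite ∧ Disjoint K F ∧ mub X K = {m}
  j4 : ∀ T : Set X, T ⊆ level X 2 → T.Finite → T.Nonempty →
        ∃ t ∈ level X 1, ∀ m ∈ T, t < m

/-- `(A, B)` is a member of `Str X`. -/
def StrMem (X : Type*) [PartialOrder X] (A B : Set X) : Prop :=
  A ⊆ level X 1 ∧ B ⊆ level X 2 ∧
  ((A.Finite ∧ A.Nonempty ∧ B.Finite ∧ B.Nonempty) ∨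
    (∃ x, x ∈ level X 1 ∧ A = {x} ∧ B = {z ∈ level X 2 | x < z})) ∧
  (∃ a ∈ A, ∀ b ∈ B, a < b)

/-- `(C, D)` dominates `(A, B)` via `W`. -/
def Dominates (X : Type*) [PartialOrder X] (C D A B W : Set X) : Prop :=
  A ⊂ C ∧ D ⊆ B ∧ W ⊆ C ∧ W.Nonempty ∧
  (∀ w ∈ W, ∀ d ∈ D, w < d) ∧
  (∀ a ∈ A, ∀ m : X, a < m → (∀ w ∈ W, w < m) → m ∈ D)

/-- The order on `Str X`: `(A,B) ≤ (C,D)`. -/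
def StrLE (X : Type*) [PartialOrder X] (A B C D : Set X) : Prop :=
  (A = C ∧ B = D) ∨ ∃ W : Set X, Dominates X C D A B W

/-- The strict order on `Str X`: `(A,B) < (C,D)`. -/
def StrLT (X : Type*) [PartialOrder X] (A B C D : Set X) : Prop :=
  StrLE X A B C D ∧ ¬(A = C ∧ B = D)

/-- `ℓ(A,B)`: the number of `a ∈ A` with `a < b` for all `b ∈ B`. -/
noncomputable def ell (X : Type*) [PartialOrder X] (A B : Set X) : ℕ :=
  {a ∈ A | ∀ b ∈ B, a < b}.ncard

/-- `η(A,B) = |A| - ℓ(A,B)`. -/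
noncomputable def eta (X : Type*) [PartialOrder X] (A B : Set X) : ℕ :=
  A.ncard - ell X A B

/-- `Str X` as a type of pairs. -/
abbrev Str (X : Type*) [PartialOrder X] := {p : Set X × Set X // StrMem X p.1 p.2}

def strLE {X : Type*} [PartialOrder X] (p q : Str X) : Prop :=
  StrLE X p.1.1 p.1.2 q.1.1 q.1.2

def strLT {X : Type*} [PartialOrder X] (p q : Str X) : Prop :=
  strLE p q ∧ p ≠ q

/-- Membership in `Str_F X`: members of `Str X` with both coordinates finite. -/
def StrFMem (X : Type*) [PartialOrder X] (A B : Set X) : Prop :=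
  StrMem X A B ∧ A.Finite ∧ B.Finite

/-- `Str_F X` as a type of pairs. -/
abbrev StrF (X : Type*) [PartialOrder X] := {p : Set X × Set X // StrFMem X p.1 p.2}

def strFLE {X : Type*} [PartialOrder X] (p q : StrF X) : Prop :=
  StrLE X p.1.1 p.1.2 q.1.1 q.1.2

/-- `K_{Str_F X}(z)`: all `(K, {b}) ∈ Str_F X` with `z ∈ K` and `mub K = {b}`. -/
def KSet (X : Type*) [PartialOrder X] (z : X) : Set (StrF X) :=
  {p | z ∈ p.1.1 ∧ ∃ b : X, p.1.2 = {b} ∧ mub X p.1.1 = {b}}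

/-- The three-element poset `𝕀₂`: two incomparable minimal elements below one top element,
realized as the nonempty subsets of a two-element set ordered by inclusion. -/
abbrev I2 := {s : Set (Fin 2) // s.Nonempty}


section Basics

variable {Z : Type*} [PartialOrder Z]

lemma height_le_two (hZ : IsJPoset Z) (a : Z) : Order.height a ≤ (2 : ℕ∞) := by
  have h := Order.height_le_krullDim a
  rw [hZ.dim2] at h
  have h2 : ((Order.height a : ℕ∞) : WithBot ℕ∞) ≤ ((2 : ℕ∞) : WithBot ℕ∞) := h
  exact WithBot.coe_le_coe.mp h2

lemma no_chain3 (hZ : IsJPoset Z) {a b c d : Z} (h1 : a < b) (h2 : b < c) (h3 : c < d) :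
    False := by
  have ha : Order.height a < Order.height b :=
    Order.height_strictMono h1 (lt_of_le_of_lt (height_le_two hZ a) (by decide))
  have hb : Order.height b < Order.height c :=
    Order.height_strictMono h2 (lt_of_le_of_lt (height_le_two hZ b) (by decide))
  have hc : Order.height c < Order.height d :=
    Order.height_strictMono h3 (lt_of_le_of_lt (height_le_two hZ c) (by decide))
  have hd := height_le_two hZ d
  have hdt : Order.height d ≠ ⊤ := fun h => by rw [h] at hd; exact absurd hd (by decide)
  lift Order.height d to ℕ using hdt with n
  have hct : Order.height c ≠ ⊤ := (hc.trans_le le_top).ne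
  lift Order.height c to ℕ using hct with m
  have hbt : Order.height b ≠ ⊤ := (hb.trans_le le_top).ne
  lift Order.height b to ℕ using hbt with k
  have hat : Order.height a ≠ ⊤ := (ha.trans_le le_top).ne
  lift Order.height a to ℕ using hat with l
  have h2' : (n : ℕ∞) ≤ ((2:ℕ) : ℕ∞) := by exact_mod_cast hd
  have := (Nat.cast_lt (α := ℕ∞)).mp ha
  have := (Nat.cast_lt (α := ℕ∞)).mp hb
  have := (Nat.cast_lt (α := ℕ∞)).mp hc
  have := (Nat.cast_le (α := ℕ∞)).mp h2'
  omega

lemma mem_lvl1 {x : Z} (hx : x ∈ level Z 1) : Order.height x = ((1:ℕ) : ℕ∞) := hx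

lemma mem_lvl2 {x : Z} (hx : x ∈ level Z 2) : Order.height x = ((2:ℕ) : ℕ∞) := hx

lemma lvl2_of_lvl1_lt (hZ : IsJPoset Z) {x z : Z} (hx : x ∈ level Z 1) (hlt : x < z) :
    z ∈ level Z 2 := by
  have h1 := mem_lvl1 hx
  have hlt' : Order.height x < Order.height z :=
    Order.height_strictMono hlt (by rw [h1]; decide)
  have hle := height_le_two hZ z
  rw [h1] at hlt'
  have h2 : (2 : ℕ∞) ≤ Order.height z := by
    have h3 : (1 : ℕ∞) < Order.height z := by exact_mod_cast hlt'
    have := (ENat.add_one_le_iff (m := 1) (by decide)).mpr h3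
    simpa [one_add_one_eq_two] using this
  show Order.height z = ((2:ℕ) : ℕ∞)
  have := le_antisymm hle h2
  exact_mod_cast this

lemma lvl1_not_lt (hZ : IsJPoset Z) {x y : Z} (hx : x ∈ level Z 1) (hy : y ∈ level Z 1) :
    ¬ x < y := by
  intro h
  have h2 := mem_lvl2 (lvl2_of_lvl1_lt hZ hx h)
  have h1 := mem_lvl1 hy
  rw [h1] at h2
  exact absurd h2 (by decide)

lemma lvl_ne {x b : Z} (hx : x ∈ level Z 1) (hb : b ∈ level Z 2) : x ≠ b := by
  intro h
  have h1 := mem_lvl1 hx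
  have h2 : Order.height x = ((2:ℕ) : ℕ∞) := h ▸ mem_lvl2 hb
  rw [h1] at h2
  exact absurd h2 (by decide)

lemma lt_of_le_lvl {x b : Z} (hx : x ∈ level Z 1) (hb : b ∈ level Z 2) (h : x ≤ b) : x < b :=
  lt_of_le_of_ne h (lvl_ne hx hb)

lemma exists_above (hZ : IsJPoset Z) {x : Z} (hx : x ∈ level Z 1) :
    ∃ b, b ∈ level Z 2 ∧ x < b := by
  obtain ⟨z, hz⟩ := (hZ.j2 x hx).nonempty
  exact ⟨z, lvl2_of_lvl1_lt hZ hx hz, hz⟩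

lemma exists_below {x : Z} (hx : x ∈ level Z 1) : ∃ y, y < x := by
  have h1 := mem_lvl1 hx
  have : ¬ IsMin x := by
    intro h
    rw [Order.height_eq_zero.mpr h] at h1
    exact absurd h1 (by decide)
  exact not_isMin_iff.mp this

end Basics

section Mub

variable {Z : Type*} [PartialOrder Z]

lemma mub_of_ub {S : Set Z} {b : Z} (h : upperBounds S = {b}) : mub Z S = {b} := by
  ext m
  constructor
  · rintro ⟨hm, -⟩
    rwa [h] at hm
  · rintro rfl
    refine ⟨by rw [h]; rfl, ?_⟩
    intro y hy
    rw [h] at hy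
    rw [hy]
    exact lt_irrefl m

lemma K_nonempty (hZ : IsJPoset Z) {K : Set Z} {b : Z} (hmub : mub Z K = {b})
    (hb : b ∈ level Z 2) : K.Nonempty := by
  rw [Set.nonempty_iff_ne_empty]
  rintro rfl
  have hbm : b ∈ mub Z (∅ : Set Z) := by rw [hmub]; rfl
  obtain ⟨-, hmin⟩ := hbm
  have : IsMin b := by
    intro y hy
    rcases eq_or_lt_of_le hy with h | h
    · exact h.ge
    · exact absurd h (hmin y (by simp [upperBounds]))
  have h0 := Order.height_eq_zero.mpr this
  have h2 := mem_lvl2 hb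
  rw [h0] at h2
  exact absurd h2 (by decide)

lemma ub_eq_of_mub (hZ : IsJPoset Z) {K : Set Z} {b : Z} (hK : K ⊆ level Z 1)
    (hb : b ∈ level Z 2) (hmub : mub Z K = {b}) : upperBounds K = {b} := by
  have hbub : b ∈ upperBounds K := by
    have : b ∈ mub Z K := by rw [hmub]; rfl
    exact this.1
  obtain ⟨k, hk⟩ := K_nonempty hZ hmub hb
  have hkb : k < b := lt_of_le_lvl (hK hk) hb (hbub hk)
  obtain ⟨y, hy⟩ := exists_below (hK hk)
  ext m
  simp only [Set.mem_singleton_iff]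
  constructor
  · intro hm
    by_contra hne
    have hm1 : m ∉ mub Z K := by rw [hmub]; simpa using hne
    have h1 : ∃ m1 ∈ upperBounds K, m1 < m := by
      by_contra hcon
      push_neg at hcon
      exact hm1 ⟨hm, fun u hu hlt => (hcon u hu) hlt⟩
    obtain ⟨m1, hm1u, hm1lt⟩ := h1
    rcases eq_or_ne m1 b with rfl | hne1
    · exact no_chain3 hZ hy hkb hm1lt
    · have hm11 : m1 ∉ mub Z K := by rw [hmub]; simpa using hne1
      have h2 : ∃ m2 ∈ upperBounds K, m2 < m1 := by
        by_contra hcon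
        push_neg at hcon
        exact hm11 ⟨hm1u, fun u hu hlt => (hcon u hu) hlt⟩
      obtain ⟨m2, hm2u, hm2lt⟩ := h2
      rcases eq_or_ne m2 b with rfl | hne2
      · exact no_chain3 hZ hkb hm2lt hm1lt
      · have hm22 : m2 ∉ mub Z K := by rw [hmub]; simpa using hne2
        have h3 : ∃ m3 ∈ upperBounds K, m3 < m2 := by
          by_contra hcon
          push_neg at hcon
          exact hm22 ⟨hm2u, fun u hu hlt => (hcon u hu) hlt⟩
        obtain ⟨m3, -, hm3lt⟩ := h3
        exact no_chain3 hZ hm3lt hm2lt hm1lt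
  · rintro rfl; exact hbub

lemma clean_of_mub (hZ : IsJPoset Z) {K : Set Z} {b : Z} (hK : K ⊆ level Z 1)
    (hb : b ∈ level Z 2) (hmub : mub Z K = {b}) : ∀ k ∈ K, k < b := by
  intro k hk
  have hbub : b ∈ upperBounds K := by rw [ub_eq_of_mub hZ hK hb hmub]; rfl
  exact lt_of_le_lvl (hK hk) hb (hbub hk)

lemma strictub_of_mub (hZ : IsJPoset Z) {K : Set Z} {b : Z} (hK : K ⊆ level Z 1)
    (hb : b ∈ level Z 2) (hmub : mub Z K = {b}) : ∀ m, (∀ k ∈ K, k < m) → m = b := by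
  intro m hm
  have : m ∈ upperBounds K := fun y hy => (hm y hy).le
  rwa [ub_eq_of_mub hZ hK hb hmub] at this

/-- enhanced J3 -/
lemma j3' (hZ : IsJPoset Z) {b : Z} (hb : b ∈ level Z 2) {F : Set Z} (hF : F ⊆ level Z 1)
    (hFfin : F.Finite) :
    ∃ K : Set Z, K ⊆ level Z 1 ∧ K.Finite ∧ Disjoint K F ∧ K.Nonempty ∧
      upperBounds K = {b} ∧ mub Z K = {b} ∧ (∀ k ∈ K, k < b) := by
  obtain ⟨K, hK1, hKfin, hKdisj, hKmub⟩ := hZ.j3 b hb F hF hFfin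
  exact ⟨K, hK1, hKfin, hKdisj, K_nonempty hZ hKmub hb, ub_eq_of_mub hZ hK1 hb hKmub, hKmub,
    clean_of_mub hZ hK1 hb hKmub⟩

lemma two_of_mub (hZ : IsJPoset Z) {K : Set Z} {b : Z} (hK : K ⊆ level Z 1)
    (hb : b ∈ level Z 2) (hmub : mub Z K = {b}) : ∃ k k', k ∈ K ∧ k' ∈ K ∧ k ≠ k' := by
  obtain ⟨k, hk⟩ := K_nonempty hZ hmub hb
  by_contra hcon
  push_neg at hcon
  have hsingle : K = {k} := by
    ext j
    simp only [Set.mem_singleton_iff]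
    exact ⟨fun hj => hcon j k hj hk, fun hj => hj ▸ hk⟩
  have : k ∈ upperBounds K := by
    rw [hsingle]
    intro y hy
    simp only [Set.mem_singleton_iff] at hy
    exact hy.le
  rw [ub_eq_of_mub hZ hK hb hmub] at this
  exact lvl_ne (hK hk) hb this

end Mub

section StrFBasic

variable {Z : Type*} [PartialOrder Z]

namespace StrFAux

lemma A_lvl1 (p : StrF Z) : p.1.1 ⊆ level Z 1 := p.2.1.1
lemma B_lvl2 (p : StrF Z) : p.1.2 ⊆ level Z 2 := p.2.1.2.1
lemma A_fin (p : StrF Z) : p.1.1.Finite := p.2.2.1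
lemma B_fin (p : StrF Z) : p.1.2.Finite := p.2.2.2

lemma A_ne (p : StrF Z) : p.1.1.Nonempty := by
  rcases p.2.1.2.2.1 with h | ⟨x, hx, hA, hB⟩
  · exact h.2.1
  · rw [hA]; exact ⟨x, rfl⟩

lemma B_ne (hZ : IsJPoset Z) (p : StrF Z) : p.1.2.Nonempty := by
  rcases p.2.1.2.2.1 with h | ⟨x, hx, hA, hB⟩
  · exact h.2.2.2
  · obtain ⟨b, hb, hxb⟩ := exists_above hZ hx
    rw [hB]
    exact ⟨b, hb, hxb⟩

lemma witness (p : StrF Z) : ∃ a ∈ p.1.1, ∀ b ∈ p.1.2, a < b := p.2.1.2.2.2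

/-- build a StrFMem -/
lemma mk_mem {A B : Set Z} (hA1 : A ⊆ level Z 1) (hB2 : B ⊆ level Z 2)
    (hAfin : A.Finite) (hAne : A.Nonempty) (hBfin : B.Finite) (hBne : B.Nonempty)
    {a : Z} (ha : a ∈ A) (hab : ∀ b ∈ B, a < b) : StrFMem Z A B :=
  ⟨⟨hA1, hB2, Or.inl ⟨hAfin, hAne, hBfin, hBne⟩, ⟨a, ha, hab⟩⟩, hAfin, hBfin⟩

/-- the key auxiliary property of the *upper* element governing strict order -/
def Good (q : StrF Z) : Prop :=
  ∃ W : Set Z, W ⊆ q.1.1 ∧ W.Nonempty ∧ (∀ w ∈ W, ∀ d ∈ q.1.2, w < d) ∧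
    (∀ m, (∀ w ∈ W, w < m) → m ∈ q.1.2)

lemma le_iff (p q : StrF Z) :
    strFLE p q ↔ p = q ∨ (p.1.1 ⊂ q.1.1 ∧ q.1.2 ⊆ p.1.2 ∧ Good q) := by
  constructor
  · rintro (⟨h1, h2⟩ | ⟨W, hAC, hDB, hWC, hWne, hWD, hE3⟩)
    · left
      exact Subtype.ext (Prod.ext h1 h2)
    · right
      obtain ⟨a, ha, hab⟩ := witness p
      refine ⟨hAC, hDB, insert a W, ?_, ⟨a, Set.mem_insert _ _⟩, ?_, ?_⟩
      · exact Set.insert_subset (hAC.1 ha) hWC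
      · rintro w (rfl | hw) d hd
        · exact hab d (hDB hd)
        · exact hWD w hw d hd
      · intro m hm
        exact hE3 a ha m (hm a (Set.mem_insert _ _)) (fun w hw => hm w (Set.mem_insert_of_mem _ hw))
  · rintro (rfl | ⟨hss, hBB, W, hWC, hWne, hWD, h3⟩)
    · left; exact ⟨rfl, rfl⟩
    · right
      exact ⟨W, hss, hBB, hWC, hWne, hWD, fun a ha m ham hm => h3 m hm⟩

lemma le_refl (p : StrF Z) : strFLE p p := Or.inl ⟨rfl, rfl⟩

lemma le_of (p q : StrF Z) (h1 : p.1.1 ⊂ q.1.1) (h2 : q.1.2 ⊆ p.1.2) (h3 : Good q) :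
    strFLE p q := (le_iff p q).mpr (Or.inr ⟨h1, h2, h3⟩)

lemma le_antisymm' {p q : StrF Z} (h1 : strFLE p q) (h2 : strFLE q p) : p = q := by
  rcases (le_iff p q).mp h1 with h | ⟨hss, -, -⟩
  · exact h
  rcases (le_iff q p).mp h2 with h | ⟨hss', -, -⟩
  · exact h.symm
  exact absurd hss'.subset hss.2

lemma B_mono {p q : StrF Z} (h : strFLE p q) : q.1.2 ⊆ p.1.2 := by
  rcases (le_iff p q).mp h with rfl | ⟨-, h2, -⟩
  · exact le_rfl
  · exact h2

lemma A_mono {p q : StrF Z} (h : strFLE p q) : p.1.1 ⊆ q.1.1 := by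
  rcases (le_iff p q).mp h with rfl | ⟨h1, -, -⟩
  · exact le_rfl
  · exact h1.subset

end StrFAux

end StrFBasic

section Peaks

variable {Z : Type*} [PartialOrder Z]

namespace StrFAux

def IsPeak (p : StrF Z) : Prop := ∃ b, p.1.2 = {b} ∧ mub Z p.1.1 = {b}

lemma peak_b_lvl2 {p : StrF Z} {b : Z} (hB : p.1.2 = {b}) : b ∈ level Z 2 :=
  B_lvl2 p (by rw [hB]; rfl)

lemma peak_ub (hZ : IsJPoset Z) {p : StrF Z} {b : Z} (hB : p.1.2 = {b})
    (hmub : mub Z p.1.1 = {b}) : upperBounds p.1.1 = {b} :=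
  ub_eq_of_mub hZ (A_lvl1 p) (peak_b_lvl2 hB) hmub

lemma peak_clean (hZ : IsJPoset Z) {p : StrF Z} {b : Z} (hB : p.1.2 = {b})
    (hmub : mub Z p.1.1 = {b}) : ∀ a ∈ p.1.1, a < b :=
  clean_of_mub hZ (A_lvl1 p) (peak_b_lvl2 hB) hmub

lemma peak_two (hZ : IsJPoset Z) {p : StrF Z} {b : Z} (hB : p.1.2 = {b})
    (hmub : mub Z p.1.1 = {b}) : ∃ k k', k ∈ p.1.1 ∧ k' ∈ p.1.1 ∧ k ≠ k' :=
  two_of_mub hZ (A_lvl1 p) (peak_b_lvl2 hB) hmub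

lemma peak_not_single (hZ : IsJPoset Z) {p : StrF Z} {b : Z} (hB : p.1.2 = {b})
    (hmub : mub Z p.1.1 = {b}) (x : Z) : p.1.1 ≠ {x} := by
  intro h
  obtain ⟨k, k', hk, hk', hne⟩ := peak_two hZ hB hmub
  rw [h] at hk hk'
  simp only [Set.mem_singleton_iff] at hk hk'
  exact hne (hk.trans hk'.symm)

lemma peak_good (hZ : IsJPoset Z) {p : StrF Z} (hp : IsPeak p) : Good p := by
  obtain ⟨b, hB, hmub⟩ := hp
  refine ⟨p.1.1, le_rfl, A_ne p, ?_, ?_⟩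
  · intro w hw d hd
    rw [hB] at hd
    rw [hd]
    exact peak_clean hZ hB hmub w hw
  · intro m hm
    rw [hB]
    exact strictub_of_mub hZ (A_lvl1 p) (peak_b_lvl2 hB) hmub m hm

/-- construct a peak ({x} ∪ K, {b}) with K avoiding F -/
lemma mk_peak (hZ : IsJPoset Z) {b x : Z} (hb : b ∈ level Z 2) (hx : x ∈ level Z 1)
    (hxb : x < b) {F : Set Z} (hF : F ⊆ level Z 1) (hFfin : F.Finite) :
    ∃ p : StrF Z, p.1.2 = {b} ∧ mub Z p.1.1 = {b} ∧ x ∈ p.1.1 ∧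
      (∀ a ∈ p.1.1, a = x ∨ a ∉ F) := by
  obtain ⟨K, hK1, hKfin, hKdisj, hKne, hKub, hKmub, hKlt⟩ :=
    j3' hZ hb (Set.insert_subset hx hF) (hFfin.insert x)
  have hub : upperBounds (insert x K) = {b} := by
    rw [upperBounds_insert, hKub]
    ext m
    simp only [Set.mem_inter_iff, Set.mem_Ici, Set.mem_singleton_iff]
    exact ⟨fun h => h.2, fun h => ⟨h ▸ hxb.le, h⟩⟩
  have hmem : StrFMem Z (insert x K) {b} :=
    mk_mem (Set.insert_subset hx hK1) (by simp [hb]) (hKfin.insert x) ⟨x, Set.mem_insert _ _⟩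
      (Set.finite_singleton b) ⟨b, rfl⟩ (Set.mem_insert _ _) (by
        intro d hd
        rw [Set.mem_singleton_iff] at hd
        exact hd ▸ hxb)
  refine ⟨⟨(insert x K, {b}), hmem⟩, rfl, mub_of_ub hub, Set.mem_insert _ _, ?_⟩
  rintro a (rfl | ha)
  · exact Or.inl rfl
  · exact Or.inr fun haF => (Set.disjoint_left.mp hKdisj ha) (Set.mem_insert_of_mem _ haF)

/-- join of two elements with the same singleton second coordinate -/
lemma join (hZ : IsJPoset Z) {q q' : StrF Z} {b : Z} (hq : q.1.2 = {b}) (hq' : q'.1.2 = {b}) :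
    ∃ w, strFLE q w ∧ strFLE q' w := by
  have hb : b ∈ level Z 2 := peak_b_lvl2 hq
  obtain ⟨K, hK1, hKfin, hKdisj, hKne, hKub, hKmub, hKlt⟩ :=
    j3' hZ hb (F := q.1.1 ∪ q'.1.1) (Set.union_subset (A_lvl1 q) (A_lvl1 q'))
      ((A_fin q).union (A_fin q'))
  set E : Set Z := (q.1.1 ∪ q'.1.1) ∪ K with hE
  obtain ⟨k, hk⟩ := hKne
  have hkE : k ∈ E := Set.mem_union_right _ hk
  have hknotin : k ∉ q.1.1 ∪ q'.1.1 := Set.disjoint_left.mp hKdisj hk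
  have hmem : StrFMem Z E {b} := by
    refine mk_mem ?_ (by simp [hb]) ?_ ⟨k, hkE⟩ (Set.finite_singleton b) ⟨b, rfl⟩ hkE ?_
    · exact Set.union_subset (Set.union_subset (A_lvl1 q) (A_lvl1 q')) hK1
    · exact ((A_fin q).union (A_fin q')).union hKfin
    · intro d hd
      rw [Set.mem_singleton_iff] at hd
      exact hd ▸ hKlt k hk
  set w : StrF Z := ⟨(E, {b}), hmem⟩ with hw
  have hgood : Good w := by
    refine ⟨K, fun a ha => Set.mem_union_right _ ha, ⟨k, hk⟩, ?_, ?_⟩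
    · intro u hu d hd
      rw [Set.mem_singleton_iff] at hd
      exact hd ▸ hKlt u hu
    · intro m hm
      show m ∈ ({b} : Set Z)
      rw [Set.mem_singleton_iff]
      exact strictub_of_mub hZ hK1 hb hKmub m hm
  refine ⟨w, ?_, ?_⟩
  · refine le_of q w ⟨fun a ha => Set.mem_union_left _ (Set.mem_union_left _ ha), ?_⟩
      (by rw [hq]) hgood
    intro hsub
    exact hknotin (Set.mem_union_left _ (hsub hkE))
  · refine le_of q' w ⟨fun a ha => Set.mem_union_left _ (Set.mem_union_right _ ha), ?_⟩
      (by rw [hq']) hgood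
    intro hsub
    exact hknotin (Set.mem_union_right _ (hsub hkE))

end StrFAux

end Peaks

section Abstract

variable {Z : Type*} [PartialOrder Z]

namespace StrFAux

/-- abstract: non-minimal -/
def NMa (q : StrF Z) : Prop := ∃ r, r ≠ q ∧ strFLE r q

/-- abstract: up-directed -/
def Dir (q : StrF Z) : Prop :=
  ∀ u v, strFLE q u → strFLE q v → ∃ w, strFLE u w ∧ strFLE v w

/-- abstract: common upper bound -/
def Sharp (q q' : StrF Z) : Prop := ∃ u, strFLE q u ∧ strFLE q' u

/-- abstract: strictly below -/
def Below (s q : StrF Z) : Prop := s ≠ q ∧ strFLE s q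

/-- abstract: s is an atom below q -/
def Atom (s q : StrF Z) : Prop :=
  Below s q ∧ ∀ r, Below r q →
    (∀ q'', Dir q'' → Sharp q q'' → Below s q'' → Below r q'') →
    (∀ q'', Dir q'' → Sharp q q'' → Below r q'' → Below s q'')

/-- abstract characterization of peaks -/
def PeakA (q : StrF Z) : Prop :=
  NMa q ∧ Dir q ∧ ∀ q', Dir q' → NMa q' → Sharp q q' →
    (∀ s, Atom s q → Below s q') → strFLE q q'

lemma below_iff {s q : StrF Z} : Below s q ↔ s.1.1 ⊂ q.1.1 ∧ q.1.2 ⊆ s.1.2 ∧ Good q := by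
  constructor
  · rintro ⟨hne, hle⟩
    rcases (le_iff s q).mp hle with h | h
    · exact absurd h hne
    · exact h
  · rintro ⟨h1, h2, h3⟩
    refine ⟨?_, le_of s q h1 h2 h3⟩
    intro h
    rw [h] at h1
    exact h1.2 le_rfl

lemma good_two (hZ : IsJPoset Z) {q : StrF Z} (hq : Good q) :
    ∃ a, a ∈ q.1.1 ∧ q.1.1 ≠ {a} := by
  obtain ⟨W, hWA, ⟨a, ha⟩, hWlt, hWub⟩ := hq
  refine ⟨a, hWA ha, ?_⟩
  intro hA
  have hW : W = {a} := Set.Subset.antisymm (hA ▸ hWA) (Set.singleton_subset_iff.mpr ha)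
  have hinf : {z | a < z}.Infinite := hZ.j2 a (A_lvl1 q (hWA ha))
  have hsub : {z | a < z} ⊆ q.1.2 := by
    intro m hm
    refine hWub m ?_
    rw [hW]
    rintro w rfl
    exact hm
  exact hinf ((B_fin q).subset hsub)

lemma NMa_iff (hZ : IsJPoset Z) (q : StrF Z) : NMa q ↔ Good q := by
  constructor
  · rintro ⟨r, hne, hle⟩
    rcases (le_iff r q).mp hle with h | ⟨-, -, h3⟩
    · exact absurd h hne
    · exact h3
  · intro hgood
    obtain ⟨a, haA, hAne⟩ := good_two hZ hgood
    obtain ⟨W, hWA, hWne, hWlt, hWub⟩ := hgood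
    have haW : ∀ w ∈ W, ∀ d ∈ q.1.2, w < d := hWlt
    -- the witness a is a member of q.1.1 with a < everything in q.1.2? not necessarily;
    -- we need a member of W for the singleton below. Choose a ∈ W instead.
    obtain ⟨a', ha'⟩ := hWne
    have ha'A : a' ∈ q.1.1 := hWA ha'
    have hA'ne : q.1.1 ≠ {a'} := by
      intro hA
      have hW : W = {a'} := Set.Subset.antisymm (hA ▸ hWA) (Set.singleton_subset_iff.mpr ha')
      have hinf : {z | a' < z}.Infinite := hZ.j2 a' (A_lvl1 q ha'A)
      have hsub : {z | a' < z} ⊆ q.1.2 := by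
        intro m hm
        refine hWub m ?_
        rw [hW]
        rintro w rfl
        exact hm
      exact hinf ((B_fin q).subset hsub)
    have hmem : StrFMem Z {a'} q.1.2 :=
      mk_mem (by simp [A_lvl1 q ha'A]) (B_lvl2 q) (Set.finite_singleton _) ⟨a', rfl⟩
        (B_fin q) (B_ne hZ q) rfl (fun d hd => hWlt a' ha' d hd)
    set r : StrF Z := ⟨({a'}, q.1.2), hmem⟩ with hr
    have hss : r.1.1 ⊂ q.1.1 := ⟨Set.singleton_subset_iff.mpr ha'A, by
      intro hsub
      exact hA'ne (Set.Subset.antisymm (fun z hz => hsub hz) (Set.singleton_subset_iff.mpr ha'A))⟩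
    refine ⟨r, ?_, le_of r q hss le_rfl ⟨W, hWA, ⟨a', ha'⟩, hWlt, hWub⟩⟩
    intro h
    apply hA'ne
    rw [← h]
  
lemma single_of_dir (hZ : IsJPoset Z) {q : StrF Z} (hdir : Dir q) : ∃ b, q.1.2 = {b} := by
  obtain ⟨b, hb⟩ := B_ne hZ q
  refine ⟨b, ?_⟩
  ext d
  simp only [Set.mem_singleton_iff]
  refine ⟨fun hd => ?_, fun hd => hd ▸ hb⟩
  by_contra hne
  -- construct two incompatible elements above q
  have hblvl : b ∈ level Z 2 := B_lvl2 q hb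
  have hdlvl : d ∈ level Z 2 := B_lvl2 q hd
  have mk : ∀ e, e ∈ q.1.2 → ∃ u : StrF Z, u.1.2 = {e} ∧ strFLE q u := by
    intro e he
    have helvl : e ∈ level Z 2 := B_lvl2 q he
    obtain ⟨K, hK1, hKfin, hKdisj, hKne, hKub, hKmub, hKlt⟩ :=
      j3' hZ helvl (F := q.1.1) (A_lvl1 q) (A_fin q)
    obtain ⟨k, hk⟩ := hKne
    have hknotin : k ∉ q.1.1 := Set.disjoint_left.mp hKdisj hk
    have hmem : StrFMem Z (q.1.1 ∪ K) {e} := by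
      refine mk_mem (Set.union_subset (A_lvl1 q) hK1) (by simp [helvl])
        ((A_fin q).union hKfin) ⟨k, Set.mem_union_right _ hk⟩ (Set.finite_singleton _) ⟨e, rfl⟩
        (Set.mem_union_right _ hk) ?_
      intro d' hd'
      rw [Set.mem_singleton_iff] at hd'
      exact hd' ▸ hKlt k hk
    set u : StrF Z := ⟨(q.1.1 ∪ K, {e}), hmem⟩ with hu
    have hgood : Good u := by
      refine ⟨K, fun a ha => Set.mem_union_right _ ha, ⟨k, hk⟩, ?_, ?_⟩
      · intro w hw d' hd'
        rw [Set.mem_singleton_iff] at hd'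
        exact hd' ▸ hKlt w hw
      · intro m hm
        show m ∈ ({e} : Set Z)
        rw [Set.mem_singleton_iff]
        exact strictub_of_mub hZ hK1 helvl hKmub m hm
    refine ⟨u, rfl, le_of q u ⟨Set.subset_union_left, ?_⟩ (Set.singleton_subset_iff.mpr he) hgood⟩
    intro hsub
    exact hknotin (hsub (Set.mem_union_right _ hk))
  obtain ⟨u, huB, hqu⟩ := mk b hb
  obtain ⟨v, hvB, hqv⟩ := mk d hd
  obtain ⟨w, huw, hvw⟩ := hdir u v hqu hqv
  have h1 : w.1.2 ⊆ {b} := huB ▸ B_mono huw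
  have h2 : w.1.2 ⊆ {d} := hvB ▸ B_mono hvw
  obtain ⟨e, he⟩ := B_ne hZ w
  have := h1 he
  have := h2 he
  simp only [Set.mem_singleton_iff] at *
  exact hne (by grind)

lemma dir_of_single (hZ : IsJPoset Z) {q : StrF Z} {b : Z} (hq : q.1.2 = {b}) : Dir q := by
  intro u v hqu hqv
  have hu : u.1.2 = {b} := by
    have h1 : u.1.2 ⊆ {b} := hq ▸ B_mono hqu
    obtain ⟨e, he⟩ := B_ne hZ u
    have := h1 he
    simp only [Set.mem_singleton_iff] at this
    rw [← this]
    exact Set.Subset.antisymm (this ▸ h1) (Set.singleton_subset_iff.mpr he)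
  have hv : v.1.2 = {b} := by
    have h1 : v.1.2 ⊆ {b} := hq ▸ B_mono hqv
    obtain ⟨e, he⟩ := B_ne hZ v
    have := h1 he
    simp only [Set.mem_singleton_iff] at this
    rw [← this]
    exact Set.Subset.antisymm (this ▸ h1) (Set.singleton_subset_iff.mpr he)
  exact join hZ hu hv

lemma dir_iff (hZ : IsJPoset Z) (q : StrF Z) : Dir q ↔ ∃ b, q.1.2 = {b} := by
  constructor
  · exact single_of_dir hZ
  · rintro ⟨b, hb⟩
    exact dir_of_single hZ hb

lemma sharp_iff (hZ : IsJPoset Z) {q q' : StrF Z} {b b' : Z} (hq : q.1.2 = {b})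
    (hq' : q'.1.2 = {b'}) : Sharp q q' ↔ b = b' := by
  constructor
  · rintro ⟨u, hu, hu'⟩
    have h1 : u.1.2 ⊆ {b} := hq ▸ B_mono hu
    have h2 : u.1.2 ⊆ {b'} := hq' ▸ B_mono hu'
    obtain ⟨e, he⟩ := B_ne hZ u
    have e1 := h1 he
    have e2 := h2 he
    simp only [Set.mem_singleton_iff] at e1 e2
    rw [← e1, ← e2]
  · rintro rfl
    exact join hZ hq hq'

end StrFAux

end Abstract

section Character

variable {Z : Type*} [PartialOrder Z]

namespace StrFAux

lemma exists_ne_mem {S : Set Z} {a : Z} (ha : a ∈ S) (hne : S ≠ {a}) :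
    ∃ a' ∈ S, a' ≠ a := by
  by_contra hcon
  push_neg at hcon
  exact hne (Set.Subset.antisymm (fun z hz => hcon z hz) (Set.singleton_subset_iff.mpr ha))

lemma sub_iff (hZ : IsJPoset Z) {q r s : StrF Z} {b : Z} (hqB : q.1.2 = {b})
    (hrq : Below r q) (hsq : Below s q) :
    (∀ q'', Dir q'' → Sharp q q'' → Below s q'' → Below r q'') ↔ r.1.1 ⊆ s.1.1 := by
  have hblvl : b ∈ level Z 2 := peak_b_lvl2 hqB
  obtain ⟨hrA, hrB, hgoodq⟩ := below_iff.mp hrq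
  obtain ⟨hsA, hsB, -⟩ := below_iff.mp hsq
  constructor
  · intro himp
    -- construct q'' := (s.A ∪ K₀, {b})
    obtain ⟨K, hK1, hKfin, hKdisj, hKne, hKub, hKmub, hKlt⟩ :=
      j3' hZ hblvl (F := s.1.1 ∪ r.1.1) (Set.union_subset (A_lvl1 s) (A_lvl1 r))
        ((A_fin s).union (A_fin r))
    obtain ⟨k, hk⟩ := hKne
    have hknotin : k ∉ s.1.1 ∪ r.1.1 := Set.disjoint_left.mp hKdisj hk
    have hmem : StrFMem Z (s.1.1 ∪ K) {b} := by
      refine mk_mem (Set.union_subset (A_lvl1 s) hK1) (by simp [hblvl])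
        ((A_fin s).union hKfin) ⟨k, Set.mem_union_right _ hk⟩ (Set.finite_singleton _)
        ⟨b, rfl⟩ (Set.mem_union_right _ hk) ?_
      intro d hd
      rw [Set.mem_singleton_iff] at hd
      exact hd ▸ hKlt k hk
    set q'' : StrF Z := ⟨(s.1.1 ∪ K, {b}), hmem⟩ with hq''
    have hgood'' : Good q'' := by
      refine ⟨K, fun a' ha' => Set.mem_union_right _ ha', ⟨k, hk⟩, ?_, ?_⟩
      · intro w hw d hd
        rw [Set.mem_singleton_iff] at hd
        exact hd ▸ hKlt w hw
      · intro m hm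
        show m ∈ ({b} : Set Z)
        rw [Set.mem_singleton_iff]
        exact strictub_of_mub hZ hK1 hblvl hKmub m hm
    have hdir'' : Dir q'' := dir_of_single hZ (b := b) rfl
    have hsharp : Sharp q q'' := (sharp_iff hZ hqB (b' := b) rfl).mpr rfl
    have hbelow : Below s q'' := by
      rw [below_iff]
      refine ⟨⟨Set.subset_union_left, fun hsub => ?_⟩, ?_, hgood''⟩
      · exact hknotin (Set.mem_union_left _ (hsub (Set.mem_union_right _ hk)))
      · show ({b} : Set Z) ⊆ s.1.2
        rw [← hqB]
        exact hsB
    have := below_iff.mp (himp q'' hdir'' hsharp hbelow)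
    intro a haR
    have hmem' : a ∈ s.1.1 ∪ K := this.1.1 haR
    rcases hmem' with h | h
    · exact h
    · exact (Set.disjoint_left.mp hKdisj h (Set.mem_union_right _ haR)).elim
  · intro hsub q'' hdir'' hsharp hbelow
    obtain ⟨b'', hb''⟩ := single_of_dir hZ hdir''
    have hbb : b = b'' := (sharp_iff hZ hqB hb'').mp hsharp
    obtain ⟨hsA'', hsB'', hgood''⟩ := below_iff.mp hbelow
    rw [below_iff]
    refine ⟨⟨hsub.trans hsA''.subset, fun hcon => ?_⟩, ?_, hgood''⟩
    · exact hsA''.2 (hcon.trans hsub)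
    · intro d hd
      rw [hb'', Set.mem_singleton_iff] at hd
      subst hd
      refine hrB ?_
      rw [hqB, hbb]
      rfl

lemma atom_iff (hZ : IsJPoset Z) {q s : StrF Z} {b : Z} (hqB : q.1.2 = {b}) :
    Atom s q ↔ Below s q ∧ ∃ a, s.1.1 = {a} := by
  constructor
  · rintro ⟨hbel, hmin⟩
    refine ⟨hbel, ?_⟩
    obtain ⟨hsA, hsB, hgoodq⟩ := below_iff.mp hbel
    obtain ⟨a, haA, hawit⟩ := witness s
    have hmem : StrFMem Z {a} s.1.2 :=
      mk_mem (by simp [A_lvl1 s haA]) (B_lvl2 s) (Set.finite_singleton _) ⟨a, rfl⟩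
        (B_fin s) (B_ne hZ s) rfl hawit
    set r : StrF Z := ⟨({a}, s.1.2), hmem⟩ with hr
    have hrq : Below r q := by
      rw [below_iff]
      refine ⟨⟨?_, ?_⟩, hsB, hgoodq⟩
      · exact (Set.singleton_subset_iff.mpr haA).trans hsA.subset
      · intro hcon
        apply hsA.2
        intro z hz
        have : z ∈ ({a} : Set Z) := hcon hz
        rw [Set.mem_singleton_iff] at this
        exact this ▸ haA
    have hpre : ∀ q'', Dir q'' → Sharp q q'' → Below s q'' → Below r q'' :=
      (sub_iff hZ hqB hrq hbel).mpr (by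
        show ({a} : Set Z) ⊆ s.1.1
        exact Set.singleton_subset_iff.mpr haA)
    have hconc := (sub_iff hZ hqB hbel hrq).mp (hmin r hrq hpre)
    refine ⟨a, Set.Subset.antisymm hconc (Set.singleton_subset_iff.mpr haA)⟩
  · rintro ⟨hbel, a, hsA⟩
    refine ⟨hbel, ?_⟩
    intro r hrq hpre
    have h1 : r.1.1 ⊆ s.1.1 := (sub_iff hZ hqB hrq hbel).mp hpre
    have h2 : s.1.1 ⊆ r.1.1 := by
      rw [hsA] at h1 ⊢
      obtain ⟨e, he⟩ := A_ne r
      have := h1 he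
      rw [Set.mem_singleton_iff] at this
      exact Set.singleton_subset_iff.mpr (this ▸ he)
    exact (sub_iff hZ hqB hbel hrq).mpr h2

end StrFAux

end Character

section PeakChar

variable {Z : Type*} [PartialOrder Z]

namespace StrFAux

lemma peakA_of_peak (hZ : IsJPoset Z) {q : StrF Z} (hpk : IsPeak q) : PeakA q := by
  obtain ⟨b, hB, hmub⟩ := hpk
  have hblvl : b ∈ level Z 2 := peak_b_lvl2 hB
  have hgood : Good q := peak_good hZ ⟨b, hB, hmub⟩
  refine ⟨(NMa_iff hZ q).mpr hgood, dir_of_single hZ hB, ?_⟩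
  intro q' hdir' hnma' hsharp hatoms
  obtain ⟨b', hb'⟩ := single_of_dir hZ hdir'
  have hbb : b = b' := (sharp_iff hZ hB hb').mp hsharp
  subst hbb
  have hsubA : q.1.1 ⊆ q'.1.1 := by
    intro a haA
    have hab : a < b := peak_clean hZ hB hmub a haA
    have hmem : StrFMem Z {a} {b} :=
      mk_mem (by simp [A_lvl1 q haA]) (by simp [hblvl]) (Set.finite_singleton _) ⟨a, rfl⟩
        (Set.finite_singleton _) ⟨b, rfl⟩ rfl (by
          intro d hd
          rw [Set.mem_singleton_iff] at hd
          exact hd ▸ hab)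
    set s : StrF Z := ⟨({a}, {b}), hmem⟩ with hs
    have hatom : Atom s q := by
      rw [atom_iff hZ hB]
      refine ⟨?_, ⟨a, rfl⟩⟩
      rw [below_iff]
      refine ⟨⟨Set.singleton_subset_iff.mpr haA, fun hcon => ?_⟩, by rw [hB], hgood⟩
      exact peak_not_single hZ hB hmub a (Set.Subset.antisymm hcon
        (Set.singleton_subset_iff.mpr haA))
    have := (below_iff.mp (hatoms s hatom)).1.1
    exact this rfl
  rcases Set.eq_or_ssubset_of_subset hsubA with heq | hss
  · have : q = q' := Subtype.ext (Prod.ext heq (by rw [hB, hb']))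
    rw [this]
    exact le_refl q'
  · exact le_of q q' hss (by rw [hB, hb']) ((NMa_iff hZ q').mp hnma')

lemma peak_of_peakA (hZ : IsJPoset Z) {q : StrF Z} (hpk : PeakA q) : IsPeak q := by
  obtain ⟨hnma, hdir, hforall⟩ := hpk
  obtain ⟨b, hB⟩ := single_of_dir hZ hdir
  have hblvl : b ∈ level Z 2 := peak_b_lvl2 hB
  have hgood : Good q := (NMa_iff hZ q).mp hnma
  -- step 1: every element of q.1.1 is < b
  have hclean : ∀ a ∈ q.1.1, a < b := by
    by_contra hcon
    push_neg at hcon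
    obtain ⟨c₀, hc₀A, hc₀b⟩ := hcon
    obtain ⟨W, hWA, ⟨w₀, hw₀⟩, hWlt, hWub⟩ := hgood
    have hw₀Cb : w₀ < b := hWlt w₀ hw₀ b (by rw [hB]; rfl)
    set Cb : Set Z := {a ∈ q.1.1 | a < b} with hCb
    obtain ⟨K, hK1, hKfin, hKdisj, hKne, hKub, hKmub, hKlt⟩ :=
      j3' hZ hblvl (F := q.1.1) (A_lvl1 q) (A_fin q)
    obtain ⟨k, hk⟩ := hKne
    have hknotin : k ∉ q.1.1 := Set.disjoint_left.mp hKdisj hk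
    have hmem : StrFMem Z (Cb ∪ K) {b} := by
      refine mk_mem (Set.union_subset (fun z hz => A_lvl1 q hz.1) hK1) (by simp [hblvl])
        (((A_fin q).subset (fun z hz => hz.1)).union hKfin)
        ⟨k, Set.mem_union_right _ hk⟩ (Set.finite_singleton _) ⟨b, rfl⟩
        (Set.mem_union_right _ hk) ?_
      intro d hd
      rw [Set.mem_singleton_iff] at hd
      exact hd ▸ hKlt k hk
    set q' : StrF Z := ⟨(Cb ∪ K, {b}), hmem⟩ with hq'
    have hgood' : Good q' := by
      refine ⟨K, fun a' ha' => Set.mem_union_right _ ha', ⟨k, hk⟩, ?_, ?_⟩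
      · intro w hw d hd
        rw [Set.mem_singleton_iff] at hd
        exact hd ▸ hKlt w hw
      · intro m hm
        show m ∈ ({b} : Set Z)
        rw [Set.mem_singleton_iff]
        exact strictub_of_mub hZ hK1 hblvl hKmub m hm
    have hdir' : Dir q' := dir_of_single hZ (b := b) rfl
    have hnma' : NMa q' := (NMa_iff hZ q').mpr hgood'
    have hsharp : Sharp q q' := (sharp_iff hZ hB (b' := b) rfl).mpr rfl
    have hatoms : ∀ s, Atom s q → Below s q' := by
      intro s hatom
      rw [atom_iff hZ hB] at hatom
      obtain ⟨hbel, a, hsA⟩ := hatom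
      obtain ⟨hsAq, hsBq, -⟩ := below_iff.mp hbel
      have haA : a ∈ q.1.1 := hsAq.subset (hsA ▸ rfl)
      obtain ⟨α, hα, hαwit⟩ := witness s
      rw [hsA, Set.mem_singleton_iff] at hα
      subst hα
      have hab : α < b := hαwit b (hsBq (by rw [hB]; rfl))
      have haCb : α ∈ Cb := ⟨haA, hab⟩
      rw [below_iff]
      refine ⟨⟨?_, fun hcon2 => ?_⟩, ?_, hgood'⟩
      · rw [hsA]
        exact Set.singleton_subset_iff.mpr (Set.mem_union_left _ haCb)
      · have : k ∈ s.1.1 := hcon2 (Set.mem_union_right _ hk)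
        rw [hsA, Set.mem_singleton_iff] at this
        exact hknotin (this ▸ haA)
      · show ({b} : Set Z) ⊆ s.1.2
        rw [← hB]
        exact hsBq
    have hle := hforall q' hdir' hnma' hsharp hatoms
    have hsubA : q.1.1 ⊆ Cb ∪ K := by
      rcases (le_iff q q').mp hle with heq | ⟨hss, -, -⟩
      · exact le_of_eq (congrArg (fun t : StrF Z => t.1.1) heq)
      · exact hss.subset
    rcases hsubA hc₀A with h | h
    · exact hc₀b h.2
    · exact hknotin ((Set.disjoint_left.mp hKdisj h hc₀A).elim)
  -- step 2: upperBounds q.1.1 = {b}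
  have hub : upperBounds q.1.1 = {b} := by
    ext m
    simp only [Set.mem_singleton_iff]
    constructor
    · intro hm
      have hmnotA : m ∉ q.1.1 := by
        intro hmA
        obtain ⟨a, haA, hAne⟩ := good_two hZ hgood
        have : ∃ a', a' ∈ q.1.1 ∧ a' ≠ m := by
          rcases eq_or_ne a m with rfl | h
          · obtain ⟨a', ha', hne'⟩ := exists_ne_mem haA hAne
            exact ⟨a', ha', hne'⟩
          · exact ⟨a, haA, h⟩
        obtain ⟨a', ha'A, ha'ne⟩ := this
        have : a' < m := lt_of_le_of_ne (hm ha'A) ha'ne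
        exact lvl1_not_lt hZ (A_lvl1 q ha'A) (A_lvl1 q hmA) this
      obtain ⟨W, hWA, hWne, hWlt, hWub⟩ := hgood
      have : m ∈ q.1.2 := by
        refine hWub m ?_
        intro w hw
        refine lt_of_le_of_ne (hm (hWA hw)) ?_
        intro h
        exact hmnotA (h ▸ hWA hw)
      rwa [hB, Set.mem_singleton_iff] at this
    · rintro rfl
      intro a haA
      exact (hclean a haA).le
  exact ⟨b, hB, mub_of_ub hub⟩

lemma peakA_iff_peak (hZ : IsJPoset Z) (q : StrF Z) : PeakA q ↔ IsPeak q :=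
  ⟨peak_of_peakA hZ, peakA_of_peak hZ⟩

end StrFAux

end PeakChar

section Transfer

namespace StrFAux

variable {X Y : Type*} [PartialOrder X] [PartialOrder Y]
variable {ψ : StrF X → StrF Y}

lemma psi_inj (hord : ∀ p q : StrF X, strFLE p q ↔ strFLE (ψ p) (ψ q)) :
    Function.Injective ψ := by
  intro p q h
  have h1 : strFLE p q := (hord p q).mpr (h ▸ le_refl (ψ p))
  have h2 : strFLE q p := (hord q p).mpr (h ▸ le_refl (ψ p))
  exact le_antisymm' h1 h2

lemma below_t (hord : ∀ p q : StrF X, strFLE p q ↔ strFLE (ψ p) (ψ q)) (s q : StrF X) : Below s q ↔ Below (ψ s) (ψ q) := by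
  constructor
  · rintro ⟨hne, hle⟩
    exact ⟨fun h => hne (psi_inj hord h), (hord s q).mp hle⟩
  · rintro ⟨hne, hle⟩
    exact ⟨fun h => hne (h ▸ rfl), (hord s q).mpr hle⟩

lemma NMa_t (hsurj : Function.Surjective ψ) (hord : ∀ p q : StrF X, strFLE p q ↔ strFLE (ψ p) (ψ q)) (q : StrF X) : NMa q ↔ NMa (ψ q) := by
  constructor
  · rintro ⟨r, hne, hle⟩
    exact ⟨ψ r, fun h => hne (psi_inj hord h), (hord r q).mp hle⟩
  · rintro ⟨r', hne, hle⟩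
    obtain ⟨r, rfl⟩ := hsurj r'
    exact ⟨r, fun h => hne (h ▸ rfl), (hord r q).mpr hle⟩

lemma dir_t (hsurj : Function.Surjective ψ) (hord : ∀ p q : StrF X, strFLE p q ↔ strFLE (ψ p) (ψ q)) (q : StrF X) : Dir q ↔ Dir (ψ q) := by
  constructor
  · intro hd u' v' hu' hv'
    obtain ⟨u, rfl⟩ := hsurj u'
    obtain ⟨v, rfl⟩ := hsurj v'
    obtain ⟨w, hw1, hw2⟩ := hd u v ((hord q u).mpr hu') ((hord q v).mpr hv')
    exact ⟨ψ w, (hord u w).mp hw1, (hord v w).mp hw2⟩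
  · intro hd u v hu hv
    obtain ⟨w', hw1, hw2⟩ := hd (ψ u) (ψ v) ((hord q u).mp hu) ((hord q v).mp hv)
    obtain ⟨w, rfl⟩ := hsurj w'
    exact ⟨w, (hord u w).mpr hw1, (hord v w).mpr hw2⟩

lemma sharp_t (hsurj : Function.Surjective ψ) (hord : ∀ p q : StrF X, strFLE p q ↔ strFLE (ψ p) (ψ q)) (p q : StrF X) : Sharp p q ↔ Sharp (ψ p) (ψ q) := by
  constructor
  · rintro ⟨u, h1, h2⟩
    exact ⟨ψ u, (hord p u).mp h1, (hord q u).mp h2⟩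
  · rintro ⟨u', h1, h2⟩
    obtain ⟨u, rfl⟩ := hsurj u'
    exact ⟨u, (hord p u).mpr h1, (hord q u).mpr h2⟩

lemma atom_t (hsurj : Function.Surjective ψ) (hord : ∀ p q : StrF X, strFLE p q ↔ strFLE (ψ p) (ψ q)) (s q : StrF X) : Atom s q ↔ Atom (ψ s) (ψ q) := by
  constructor
  · rintro ⟨hbel, hmin⟩
    refine ⟨(below_t hord s q).mp hbel, ?_⟩
    intro r' hr' hpre' q'' hdir'' hsharp'' hbel''
    obtain ⟨r, rfl⟩ := hsurj r'
    obtain ⟨q₂, rfl⟩ := hsurj q''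
    refine (below_t hord s q₂).mp ?_
    refine hmin r ((below_t hord r q).mpr hr') ?_ q₂ ((dir_t hsurj hord q₂).mpr hdir'')
      ((sharp_t hsurj hord q q₂).mpr hsharp'') ((below_t hord r q₂).mpr hbel'')
    intro q₃ hdir₃ hsharp₃ hbel₃
    exact (below_t hord r q₃).mpr (hpre' (ψ q₃) ((dir_t hsurj hord q₃).mp hdir₃)
      ((sharp_t hsurj hord q q₃).mp hsharp₃) ((below_t hord s q₃).mp hbel₃))
  · rintro ⟨hbel, hmin⟩
    refine ⟨(below_t hord s q).mpr hbel, ?_⟩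
    intro r hr hpre q₂ hdir₂ hsharp₂ hbel₂
    refine (below_t hord s q₂).mpr ?_
    refine hmin (ψ r) ((below_t hord r q).mp hr) ?_ (ψ q₂) ((dir_t hsurj hord q₂).mp hdir₂)
      ((sharp_t hsurj hord q q₂).mp hsharp₂) ((below_t hord r q₂).mp hbel₂)
    intro q₃' hdir₃ hsharp₃ hbel₃
    obtain ⟨q₃, rfl⟩ := hsurj q₃'
    exact (below_t hord r q₃).mp (hpre q₃ ((dir_t hsurj hord q₃).mpr hdir₃)
      ((sharp_t hsurj hord q q₃).mpr hsharp₃) ((below_t hord s q₃).mpr hbel₃))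

lemma peakA_t (hsurj : Function.Surjective ψ) (hord : ∀ p q : StrF X, strFLE p q ↔ strFLE (ψ p) (ψ q)) (q : StrF X) : PeakA q ↔ PeakA (ψ q) := by
  constructor
  · rintro ⟨h1, h2, h3⟩
    refine ⟨(NMa_t hsurj hord q).mp h1, (dir_t hsurj hord q).mp h2, ?_⟩
    intro q'' hdir'' hnma'' hsharp'' hatoms''
    obtain ⟨q₂, rfl⟩ := hsurj q''
    refine (hord q q₂).mp ?_
    refine h3 q₂ ((dir_t hsurj hord q₂).mpr hdir'') ((NMa_t hsurj hord q₂).mpr hnma'')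
      ((sharp_t hsurj hord q q₂).mpr hsharp'') ?_
    intro s hatom
    exact (below_t hord s q₂).mpr (hatoms'' (ψ s) ((atom_t hsurj hord s q).mp hatom))
  · rintro ⟨h1, h2, h3⟩
    refine ⟨(NMa_t hsurj hord q).mpr h1, (dir_t hsurj hord q).mpr h2, ?_⟩
    intro q₂ hdir₂ hnma₂ hsharp₂ hatoms₂
    refine (hord q q₂).mpr ?_
    refine h3 (ψ q₂) ((dir_t hsurj hord q₂).mp hdir₂) ((NMa_t hsurj hord q₂).mp hnma₂)
      ((sharp_t hsurj hord q q₂).mp hsharp₂) ?_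
    intro s' hatom'
    obtain ⟨s, rfl⟩ := hsurj s'
    exact (below_t hord s q₂).mp (hatoms₂ s ((atom_t hsurj hord s q).mpr hatom'))

lemma peak_t (hsurj : Function.Surjective ψ) (hord : ∀ p q : StrF X, strFLE p q ↔ strFLE (ψ p) (ψ q)) (hX : IsJPoset X) (hY : IsJPoset Y) (q : StrF X) :
    IsPeak q ↔ IsPeak (ψ q) := by
  rw [← peakA_iff_peak hX q, ← peakA_iff_peak hY (ψ q)]
  exact peakA_t hsurj hord q

end StrFAux

end Transfer

section Conn

variable {Z : Type*} [PartialOrder Z]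

namespace StrFAux

lemma conn3 (hZ : IsJPoset Z) {P1 P2 P3 : StrF Z} (h1 : IsPeak P1) (h2 : IsPeak P2)
    (h3 : IsPeak P3) {z : Z} (hz1 : z ∈ P1.1.1) (hz2 : z ∈ P2.1.1) (hz3 : z ∈ P3.1.1) :
    ∃ r : StrF Z, r.1.1 = {z} ∧ Below r P1 ∧ Below r P2 ∧ Below r P3 := by
  obtain ⟨b1, hB1, hmub1⟩ := h1
  obtain ⟨b2, hB2, hmub2⟩ := h2
  obtain ⟨b3, hB3, hmub3⟩ := h3
  have hzb1 : z < b1 := peak_clean hZ hB1 hmub1 z hz1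
  have hzb2 : z < b2 := peak_clean hZ hB2 hmub2 z hz2
  have hzb3 : z < b3 := peak_clean hZ hB3 hmub3 z hz3
  have hz1lvl : z ∈ level Z 1 := A_lvl1 P1 hz1
  have hBsub : ({b1, b2, b3} : Set Z) ⊆ level Z 2 := by
    rintro d (rfl | rfl | rfl)
    · exact peak_b_lvl2 hB1
    · exact peak_b_lvl2 hB2
    · exact peak_b_lvl2 hB3
  have hwit : ∀ d ∈ ({b1, b2, b3} : Set Z), z < d := by
    rintro d (rfl | rfl | rfl)
    · exact hzb1
    · exact hzb2
    · exact hzb3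
  have hmem : StrFMem Z {z} {b1, b2, b3} :=
    mk_mem (by simp [hz1lvl]) hBsub (Set.finite_singleton _) ⟨z, rfl⟩
      ((Set.finite_singleton b3).insert b2 |>.insert b1) ⟨b1, Or.inl rfl⟩ rfl hwit
  set r : StrF Z := ⟨({z}, {b1, b2, b3}), hmem⟩ with hr
  have mkbel : ∀ (P : StrF Z) (b : Z), P.1.2 = {b} → mub Z P.1.1 = {b} → z ∈ P.1.1 →
      b ∈ ({b1, b2, b3} : Set Z) → Below r P := by
    intro P b hB hmub hzP hbmem
    rw [below_iff]
    refine ⟨⟨Set.singleton_subset_iff.mpr hzP, fun hcon => ?_⟩, ?_, peak_good hZ ⟨b, hB, hmub⟩⟩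
    · exact peak_not_single hZ hB hmub z
        (Set.Subset.antisymm hcon (Set.singleton_subset_iff.mpr hzP))
    · rw [hB]
      exact Set.singleton_subset_iff.mpr hbmem
  exact ⟨r, rfl, mkbel P1 b1 hB1 hmub1 hz1 (Or.inl rfl),
    mkbel P2 b2 hB2 hmub2 hz2 (Or.inr (Or.inl rfl)),
    mkbel P3 b3 hB3 hmub3 hz3 (Or.inr (Or.inr rfl))⟩

lemma kset_iff (z : Z) (p : StrF Z) : p ∈ KSet Z z ↔ z ∈ p.1.1 ∧ IsPeak p := Iff.rfl

end StrFAux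

end Conn

namespace StrFAux

theorem main {X Y : Type*} [PartialOrder X] [PartialOrder Y]
    (hX : IsJPoset X) (hY : IsJPoset Y)
    (ψ : StrF X → StrF Y) (hψsurj : Function.Surjective ψ)
    (hψord : ∀ p q : StrF X, strFLE p q ↔ strFLE (ψ p) (ψ q))
    (x : X) (hx : x ∈ level X 1) :
    ∃! y : Y, y ∈ level Y 1 ∧ ψ '' KSet X x = KSet Y y := by
  obtain ⟨bx, hbx2, hxbx⟩ := exists_above hX hx
  obtain ⟨p₀, hp₀B, hp₀mub, hxp₀, -⟩ :=
    mk_peak hX hbx2 hx hxbx (F := ∅) (by simp) Set.finite_empty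
  obtain ⟨p₁, hp₁B, hp₁mub, hxp₁, hp₁avoid⟩ :=
    mk_peak hX hbx2 hx hxbx (F := p₀.1.1) (A_lvl1 p₀) (A_fin p₀)
  have hpk0 : IsPeak p₀ := ⟨bx, hp₀B, hp₀mub⟩
  have hpk1 : IsPeak p₁ := ⟨bx, hp₁B, hp₁mub⟩
  have hinter : p₀.1.1 ∩ p₁.1.1 = {x} := by
    ext a
    constructor
    · rintro ⟨h0, h1⟩
      rcases hp₁avoid a h1 with rfl | h
      · rfl
      · exact absurd h0 h
    · rintro rfl
      exact ⟨hxp₀, hxp₁⟩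
  have hpk0' : IsPeak (ψ p₀) := (peak_t hψsurj hψord hX hY p₀).mp hpk0
  have hpk1' : IsPeak (ψ p₁) := (peak_t hψsurj hψord hX hY p₁).mp hpk1
  obtain ⟨c₀, hc₀B, hc₀mub⟩ := hpk0'
  obtain ⟨c₁, hc₁B, hc₁mub⟩ := hpk1'
  have hc₀2 : c₀ ∈ level Y 2 := peak_b_lvl2 hc₀B
  -- W2 : every Y-peak containing a common point of the two images pulls back into KSet X x
  have W2 : ∀ y : Y, y ∈ (ψ p₀).1.1 → y ∈ (ψ p₁).1.1 →
      ∀ P' : StrF Y, IsPeak P' → y ∈ P'.1.1 → ∃ Q, ψ Q = P' ∧ Q ∈ KSet X x := by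
    intro y hyM0 hyM1 P' hP'pk hyP'
    obtain ⟨r', hr'A, hbel1, hbel2, hbel3⟩ :=
      conn3 hY hP'pk ⟨c₀, hc₀B, hc₀mub⟩ ⟨c₁, hc₁B, hc₁mub⟩ hyP' hyM0 hyM1
    obtain ⟨Q, rfl⟩ := hψsurj P'
    obtain ⟨ρ, rfl⟩ := hψsurj r'
    have hQpk : IsPeak Q := (peak_t hψsurj hψord hX hY Q).mpr hP'pk
    have hbelQ : Below ρ Q := (below_t hψord ρ Q).mpr hbel1
    have hbel0 : Below ρ p₀ := (below_t hψord ρ p₀).mpr hbel2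
    have hbel1' : Below ρ p₁ := (below_t hψord ρ p₁).mpr hbel3
    have hsub0 : ρ.1.1 ⊆ p₀.1.1 := (below_iff.mp hbel0).1.subset
    have hsub1 : ρ.1.1 ⊆ p₁.1.1 := (below_iff.mp hbel1').1.subset
    have hρsub : ρ.1.1 ⊆ {x} := by
      have h := Set.subset_inter hsub0 hsub1
      rwa [hinter] at h
    have hxQ : x ∈ Q.1.1 := by
      obtain ⟨e, he⟩ := A_ne ρ
      have hex : e = x := hρsub he
      have := (below_iff.mp hbelQ).1.subset
      exact hex ▸ this he
    exact ⟨Q, rfl, hxQ, hQpk⟩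
  -- W1 : images of elements of KSet X x are peaks meeting both images
  have W1 : ∀ P : StrF X, P ∈ KSet X x → IsPeak (ψ P) ∧
      ∃ e, e ∈ (ψ P).1.1 ∧ e ∈ (ψ p₀).1.1 ∧ e ∈ (ψ p₁).1.1 := by
    intro P hP
    obtain ⟨hxP, hPpk⟩ := hP
    obtain ⟨r, hrA, hb1, hb2, hb3⟩ := conn3 hX hPpk hpk0 hpk1 hxP hxp₀ hxp₁
    have h1 := (below_iff.mp ((below_t hψord r P).mp hb1)).1.subset
    have h2 := (below_iff.mp ((below_t hψord r p₀).mp hb2)).1.subset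
    have h3 := (below_iff.mp ((below_t hψord r p₁).mp hb3)).1.subset
    obtain ⟨e, he⟩ := A_ne (ψ r)
    exact ⟨(peak_t hψsurj hψord hX hY P).mp hPpk, e, h1 he, h2 he, h3 he⟩
  -- the intersection of the two image first-coordinates is a singleton
  have hsingle : ∀ y y', y ∈ (ψ p₀).1.1 → y ∈ (ψ p₁).1.1 → y' ∈ (ψ p₀).1.1 →
      y' ∈ (ψ p₁).1.1 → y = y' := by
    intro y y' hy0 hy1 hy'0 hy'1
    by_contra hne
    have hylvl : y ∈ level Y 1 := A_lvl1 (ψ p₀) hy0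
    have hy'lvl : y' ∈ level Y 1 := A_lvl1 (ψ p₀) hy'0
    have hyc₀ : y < c₀ := peak_clean hY hc₀B hc₀mub y hy0
    have hy'c₀ : y' < c₀ := peak_clean hY hc₀B hc₀mub y' hy'0
    obtain ⟨P', hP'B, hP'mub, hyP', hP'avoid⟩ := mk_peak hY hc₀2 hylvl hyc₀
      (F := {y, y'}) (by rintro a (rfl | rfl); exacts [hylvl, hy'lvl])
      ((Set.finite_singleton _).insert _)
    obtain ⟨P'', hP''B, hP''mub, hy'P'', hP''avoid⟩ := mk_peak hY hc₀2 hy'lvl hy'c₀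
      (F := P'.1.1 ∪ {y, y'})
      (Set.union_subset (A_lvl1 P') (by rintro a (rfl | rfl); exacts [hylvl, hy'lvl]))
      ((A_fin P').union ((Set.finite_singleton _).insert _))
    have hdisj : P'.1.1 ∩ P''.1.1 = ∅ := by
      ext a
      simp only [Set.mem_inter_iff, Set.mem_empty_iff_false, iff_false, not_and]
      intro h1 h2
      rcases hP''avoid a h2 with rfl | h
      · rcases hP'avoid a h1 with h' | h'
        · exact hne h'.symm
        · exact h' (Or.inr rfl)
      · exact h (Or.inl h1)
    obtain ⟨Q', hQ'eq, hQ'K⟩ := W2 y hy0 hy1 P' ⟨c₀, hP'B, hP'mub⟩ hyP'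
    obtain ⟨Q'', hQ''eq, hQ''K⟩ := W2 y' hy'0 hy'1 P'' ⟨c₀, hP''B, hP''mub⟩ hy'P''
    obtain ⟨ρ, hρA, hbq1, hbq2, -⟩ :=
      conn3 hX hQ'K.2 hQ''K.2 hQ''K.2 hQ'K.1 hQ''K.1 hQ''K.1
    have h1 := (below_iff.mp ((below_t hψord ρ Q').mp hbq1)).1.subset
    have h2 := (below_iff.mp ((below_t hψord ρ Q'').mp hbq2)).1.subset
    rw [hQ'eq] at h1
    rw [hQ''eq] at h2
    obtain ⟨e, he⟩ := A_ne (ψ ρ)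
    have : e ∈ P'.1.1 ∩ P''.1.1 := ⟨h1 he, h2 he⟩
    rw [hdisj] at this
    exact this
  -- the distinguished point y₀
  obtain ⟨r0, hr0A, hbr0, hbr1, -⟩ := conn3 hX hpk0 hpk1 hpk1 hxp₀ hxp₁ hxp₁
  have h1 := (below_iff.mp ((below_t hψord r0 p₀).mp hbr0)).1.subset
  have h2 := (below_iff.mp ((below_t hψord r0 p₁).mp hbr1)).1.subset
  obtain ⟨y₀, hy₀⟩ := A_ne (ψ r0)
  have hy₀0 : y₀ ∈ (ψ p₀).1.1 := h1 hy₀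
  have hy₀1 : y₀ ∈ (ψ p₁).1.1 := h2 hy₀
  have hy₀lvl : y₀ ∈ level Y 1 := A_lvl1 (ψ p₀) hy₀0
  have himage : ψ '' KSet X x = KSet Y y₀ := by
    ext P'
    simp only [Set.mem_image]
    constructor
    · rintro ⟨P, hPK, rfl⟩
      obtain ⟨hpk', e, heP, he0, he1⟩ := W1 P hPK
      have hey : e = y₀ := hsingle e y₀ he0 he1 hy₀0 hy₀1
      exact ⟨hey ▸ heP, hpk'⟩
    · intro hP'
      obtain ⟨hy₀P', hP'pk⟩ := hP'
      obtain ⟨Q, hQeq, hQK⟩ := W2 y₀ hy₀0 hy₀1 P' hP'pk hy₀P'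
      exact ⟨Q, hQK, hQeq⟩
  refine ⟨y₀, ⟨hy₀lvl, himage⟩, ?_⟩
  rintro y'' ⟨hy''lvl, heq''⟩
  obtain ⟨P, hPB, hPmub, hy₀P, hPavoid⟩ := mk_peak hY hc₀2 hy₀lvl
    (peak_clean hY hc₀B hc₀mub y₀ hy₀0) (F := {y₀, y''})
    (by rintro a (rfl | rfl); exacts [hy₀lvl, hy''lvl])
    ((Set.finite_singleton _).insert _)
  have hPK : P ∈ KSet Y y₀ := ⟨hy₀P, c₀, hPB, hPmub⟩
  have hPK'' : P ∈ KSet Y y'' := by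
    rw [← heq'', himage]
    exact hPK
  rcases hPavoid y'' hPK''.1 with h | h
  · exact h
  · exact (h (Or.inr rfl)).elim

end StrFAux
/-- If `ψ : Str_F X → Str_F Y` is an isomorphism and `x ∈ X₁`, then there is a
unique `y ∈ Y₁` such that `ψ(K_{Str_F X}(x)) = K_{Str_F Y}(y)`. -/
theorem stmt_18 {X Y : Type*} [PartialOrder X] [PartialOrder Y]
    (hX : IsJPoset X) (hY : IsJPoset Y)
    (ψ : StrF X → StrF Y) (hψsurj : Function.Surjective ψ)
    (hψord : ∀ p q : StrF X, strFLE p q ↔ strFLE (ψ p) (ψ q))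
    (x : X) (hx : x ∈ level X 1) :
    ∃! y : Y, y ∈ level Y 1 ∧ ψ '' KSet X x = KSet Y y := by
  exact StrFAux.main hX hY ψ hψsurj hψord x hx
end

section
/- Let Z be a J-poset and let z, w ∈ Z₁ be distinct. For u ∈ Z₁ let K_{Str_F Z}(u) denote the set of all (K, {b}) ∈ Str_F Z such that u ∈ K and mub(K) = {b}. Then K_{Str_F Z}(z) is not a subset of K_{Str_F Z}(w). -/
open Order Set

section Aux

variable {Z : Type*} [PartialOrder Z]

lemma height_le_two_of_jposet (hZ : IsJPoset Z) (x : Z) : Order.height x ≤ 2 := by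
  have h := Order.height_le_krullDim x
  rw [hZ.dim2] at h
  have h2 : (2 : WithBot ℕ∞) = ((2 : ℕ∞) : WithBot ℕ∞) := rfl
  rw [h2] at h
  exact WithBot.coe_le_coe.mp h

/-- If mub K = {m} and heights are bounded by 2, then m is the least upper bound. -/
lemma le_of_mub_singleton (hZ : IsJPoset Z) {K : Set Z} {m : Z}
    (hmub : mub Z K = {m}) : ∀ y ∈ upperBounds K, m ≤ y := by
  have hstep : ∀ y ∈ upperBounds K, y = m ∨ ∃ y' ∈ upperBounds K, y' < y := by
    intro y hy
    by_cases h : y = m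
    · exact Or.inl h
    · right
      by_contra hc
      push_neg at hc
      have : y ∈ mub Z K := ⟨hy, fun u hu hlt => hc u hu hlt⟩
      rw [hmub] at this
      exact h this
  have hfin : ∀ x : Z, Order.height x < ⊤ := fun x =>
    lt_of_le_of_lt (height_le_two_of_jposet hZ x) (by exact_mod_cast ENat.coe_lt_top 2)
  intro y hy
  rcases hstep y hy with rfl | ⟨y1, hy1, hlt1⟩
  · exact le_refl _
  rcases hstep y1 hy1 with rfl | ⟨y2, hy2, hlt2⟩
  · exact hlt1.le
  rcases hstep y2 hy2 with rfl | ⟨y3, hy3, hlt3⟩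
  · exact (hlt2.trans hlt1).le
  -- chain y3 < y2 < y1 < y contradicts height ≤ 2
  exfalso
  have h3 : Order.height y3 < Order.height y2 := Order.height_strictMono hlt3 (hfin y3)
  have h2 : Order.height y2 < Order.height y1 := Order.height_strictMono hlt2 (hfin y2)
  have h1 : Order.height y1 < Order.height y := Order.height_strictMono hlt1 (hfin y1)
  have hb := height_le_two_of_jposet hZ y
  have e3 : (0 : ℕ∞) ≤ Order.height y3 := zero_le
  have : (3 : ℕ∞) ≤ Order.height y := by
    calc (3 : ℕ∞) = 0 + 1 + 1 + 1 := by norm_num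
    _ ≤ Order.height y3 + 1 + 1 + 1 := by gcongr
    _ ≤ Order.height y2 + 1 + 1 := by
        gcongr
        exact (ENat.add_one_le_iff (hfin y3).ne).mpr h3
    _ ≤ Order.height y1 + 1 := by
        gcongr
        exact (ENat.add_one_le_iff (hfin y2).ne).mpr h2
    _ ≤ Order.height y := (ENat.add_one_le_iff (hfin y1).ne).mpr h1
  have : (3 : ℕ∞) ≤ 2 := this.trans hb
  exact absurd this (by decide)

end Aux


/-- In a J-poset `Z`, if `z, w ∈ Z₁` are distinct, then `K_{Str_F Z}(z)` is
not contained in `K_{Str_F Z}(w)`. -/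
theorem stmt_19 {Z : Type*} [PartialOrder Z] (hZ : IsJPoset Z)
    (z w : Z) (hz : z ∈ level Z 1) (hw : w ∈ level Z 1) (hzw : z ≠ w) :
    ¬ (KSet Z z ⊆ KSet Z w) := by
  -- pick m > z
  obtain ⟨m, hm⟩ := (hZ.j2 z hz).nonempty
  have hzm : z < m := hm
  have hfin : ∀ x : Z, Order.height x < ⊤ := fun x =>
    lt_of_le_of_lt (height_le_two_of_jposet hZ x) (by exact_mod_cast ENat.coe_lt_top 2)
  -- m has height 2
  have hm2 : m ∈ level Z 2 := by
    have h1 : Order.height z < Order.height m := Order.height_strictMono hzm (hfin z)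
    have hz1 : Order.height z = 1 := hz
    have hge : (2 : ℕ∞) ≤ Order.height m := by
      have : Order.height z + 1 ≤ Order.height m :=
        (ENat.add_one_le_iff (hfin z).ne).mpr h1
      rwa [hz1] at this
    exact le_antisymm (height_le_two_of_jposet hZ m) hge
  -- apply j3 with F = {w}
  obtain ⟨K, hK1, hKfin, hKdisj, hKmub⟩ := hZ.j3 m hm2 {w}
    (by simpa using hw) (Set.finite_singleton w)
  have hwK : w ∉ K := fun h => (Set.disjoint_left.mp hKdisj h) rfl
  -- m is least upper bound of K
  have hleast := le_of_mub_singleton hZ hKmub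
  have hmub : m ∈ upperBounds K := (by rw [hKmub]; exact rfl : m ∈ mub Z K).1
  set K' : Set Z := insert z K with hK'def
  -- m is an upper bound of K'
  have hmub' : m ∈ upperBounds K' := by
    intro a ha
    rcases ha with rfl | ha
    · exact hzm.le
    · exact hmub ha
  -- mub K' = {m}
  have hleast' : ∀ y ∈ upperBounds K', m ≤ y := by
    intro y hy
    exact hleast y (fun a ha => hy (Set.mem_insert_of_mem z ha))
  have hK'mub : mub Z K' = {m} := by
    ext y
    constructor
    · rintro ⟨hy, hmin⟩
      have := hleast' y hy
      rcases this.lt_or_eq with h | h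
      · exact absurd h (hmin m hmub')
      · exact h.symm
    · rintro rfl
      exact ⟨hmub', fun u hu hlt => absurd (hleast' u hu) (not_le_of_gt hlt)⟩
  -- the element of StrF Z
  have hmem : StrFMem Z K' {m} := by
    refine ⟨⟨?_, ?_, ?_, ?_⟩, ?_, Set.finite_singleton m⟩
    · exact Set.insert_subset hz hK1
    · simpa using hm2
    · exact Or.inl ⟨hKfin.insert z, ⟨z, Set.mem_insert z K⟩,
        Set.finite_singleton m, ⟨m, rfl⟩⟩
    · exact ⟨z, Set.mem_insert z K, fun b hb => by rw [Set.mem_singleton_iff] at hb; rw [hb]; exact hzm⟩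
    · exact hKfin.insert z
  intro hsub
  have hin : (⟨(K', {m}), hmem⟩ : StrF Z) ∈ KSet Z z :=
    ⟨Set.mem_insert z K, m, rfl, hK'mub⟩
  have := hsub hin
  exact (this.1.elim (fun h => hzw h.symm) hwK)
end
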